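/- Let h ∈ ℂ[z,t] and let r = z² + t³. If the Jacobian determinant Jac(r,h) = ∂r/∂z·∂h/∂t − ∂r/∂t·∂h/∂z lies in the principal ideal r·ℂ[z,t], then there exist γ ∈ ℂ[z,t] and c ∈ ℂ such that h = γ·r + c. -/

import Mathlib

open MvPolynomial

noncomputable def phi : MvPolynomial (Fin 2) ℂ →ₐ[ℂ] Polynomial ℂ :=
  MvPolynomial.aeval ![Polynomial.X ^ 3, -(Polynomial.X ^ 2)]

noncomputable def iot : Polynomial ℂ →ₐ[ℂ] MvPolynomial (Fin 2) ℂ :=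
  Polynomial.aeval (MvPolynomial.X 1)

lemma phi_X0 : phi (X 0) = Polynomial.X ^ 3 := by simp [phi]
lemma phi_X1 : phi (X 1) = -(Polynomial.X ^ 2) := by simp [phi]
lemma phi_C (c : ℂ) : phi (C c) = Polynomial.C c := by simp [phi]
lemma phi_iot (a : Polynomial ℂ) : phi (iot a) = a.comp (-(Polynomial.X ^ 2)) := by
  rw [Polynomial.comp_eq_aeval, iot, ← Polynomial.aeval_algHom_apply, phi_X1]

lemma chain (p : MvPolynomial (Fin 2) ℂ) :
    Polynomial.derivative (phi p) =
      phi (pderiv 0 p) * (Polynomial.C 3 * Polynomial.X ^ 2) +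
      phi (pderiv 1 p) * (Polynomial.C (-2) * Polynomial.X) := by
  induction p using MvPolynomial.induction_on with
  | C c => simp [phi_C]
  | add p q hp hq => simp [map_add, hp, hq]; ring
  | mul_X p i hp =>
    fin_cases i <;> simp only [Fin.zero_eta, Fin.mk_one, Fin.isValue]
    · rw [map_mul, Polynomial.derivative_mul, hp, phi_X0]
      rw [pderiv_mul, pderiv_mul]
      simp [pderiv_X, phi_X0, map_ofNat]
      ring
    · rw [map_mul, Polynomial.derivative_mul, hp, phi_X1]
      rw [pderiv_mul, pderiv_mul]
      simp [pderiv_X, phi_X1, map_ofNat]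
      ring

lemma division (p : MvPolynomial (Fin 2) ℂ) :
    ∃ (γ : MvPolynomial (Fin 2) ℂ) (a b : Polynomial ℂ),
      p = γ * (X 0 ^ 2 + X 1 ^ 3) + iot a + iot b * X 0 := by
  induction p using MvPolynomial.induction_on with
  | C c =>
    exact ⟨0, Polynomial.C c, 0, by simp [iot]⟩
  | add p q hp hq =>
    obtain ⟨γ₁, a₁, b₁, rfl⟩ := hp
    obtain ⟨γ₂, a₂, b₂, rfl⟩ := hq
    exact ⟨γ₁ + γ₂, a₁ + a₂, b₁ + b₂, by simp [map_add]; ring⟩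
  | mul_X p i hp =>
    obtain ⟨γ, a, b, rfl⟩ := hp
    fin_cases i <;> simp only [Fin.zero_eta, Fin.mk_one, Fin.isValue]
    · refine ⟨γ * X 0 + iot b, -(Polynomial.X ^ 3 * b), a, ?_⟩
      have h1 : iot (-(Polynomial.X ^ 3 * b)) = -(X 1 ^ 3 * iot b) := by simp [iot]
      rw [h1]; ring
    · refine ⟨γ * X 1, Polynomial.X * a, Polynomial.X * b, ?_⟩
      have h1 : iot (Polynomial.X * a) = X 1 * iot a := by simp [iot]
      have h2 : iot (Polynomial.X * b) = X 1 * iot b := by simp [iot]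
      rw [h1, h2]; ring

lemma neg_X_sq_ne : (-(Polynomial.X ^ 2) : Polynomial ℂ) ≠
    Polynomial.C ((-(Polynomial.X ^ 2) : Polynomial ℂ).coeff 0) := by
  intro hc
  have := congrArg (fun p => Polynomial.coeff p 2) hc
  simp [Polynomial.coeff_C] at this

lemma comp_zero_imp {a : Polynomial ℂ} (H : a.comp (-(Polynomial.X ^ 2)) = 0) : a = 0 := by
  rcases Polynomial.comp_eq_zero_iff.mp H with h | ⟨_, h⟩
  · exact h
  · exact absurd h neg_X_sq_ne

lemma remainder_zero (a b : Polynomial ℂ)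
    (H : a.comp (-(Polynomial.X ^ 2)) + b.comp (-(Polynomial.X ^ 2)) * Polynomial.X ^ 3 = 0) :
    a = 0 ∧ b = 0 := by
  set e : Polynomial ℂ →ₐ[ℂ] Polynomial ℂ := Polynomial.aeval (-Polynomial.X) with he
  have key : ∀ p : Polynomial ℂ, e (p.comp (-(Polynomial.X ^ 2))) = p.comp (-(Polynomial.X ^ 2)) := by
    intro p
    rw [Polynomial.comp_eq_aeval, he, ← Polynomial.aeval_algHom_apply]
    congr 1
    simp
  have hX3 : e (Polynomial.X ^ 3) = -(Polynomial.X ^ 3) := by simp [he]; ring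
  have H2 := congrArg e H
  rw [map_add, map_mul, key, key, hX3, map_zero] at H2
  have two_ne : (2 : Polynomial ℂ) ≠ 0 := by
    intro hc; have := congrArg (fun p => Polynomial.coeff p 0) hc; simp at this
  have ha2 : (2 : Polynomial ℂ) * a.comp (-(Polynomial.X ^ 2)) = 0 := by linear_combination H + H2
  have ha : a.comp (-(Polynomial.X ^ 2)) = 0 := by
    rcases mul_eq_zero.mp ha2 with h | h
    · exact absurd h two_ne
    · exact h
  have hb2 : (2 : Polynomial ℂ) * (b.comp (-(Polynomial.X ^ 2)) * Polynomial.X ^ 3) = 0 := by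
    linear_combination H - H2
  have hb : b.comp (-(Polynomial.X ^ 2)) * Polynomial.X ^ 3 = 0 := by
    rcases mul_eq_zero.mp hb2 with h | h
    · exact absurd h two_ne
    · exact h
  have hb' : b.comp (-(Polynomial.X ^ 2)) = 0 := by
    rcases mul_eq_zero.mp hb with h | h
    · exact h
    · exact absurd h (pow_ne_zero _ Polynomial.X_ne_zero)
  exact ⟨comp_zero_imp ha, comp_zero_imp hb'⟩

lemma phi_r : phi (X 0 ^ 2 + X 1 ^ 3) = 0 := by
  rw [map_add, map_pow, map_pow, phi_X0, phi_X1]; ring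

lemma ker_phi (p : MvPolynomial (Fin 2) ℂ) (hp : phi p = 0) :
    ∃ γ, p = γ * (X 0 ^ 2 + X 1 ^ 3) := by
  obtain ⟨γ, a, b, rfl⟩ := division p
  rw [map_add, map_add, map_mul, map_mul, phi_r, mul_zero, zero_add, phi_iot, phi_iot,
    phi_X0] at hp
  obtain ⟨ha, hb⟩ := remainder_zero a b hp
  subst ha; subst hb
  exact ⟨γ, by simp⟩

/-- If `Jac(r,h) ∈ r·ℂ[z,t]` for `r = z² + t³`, then `h = γ·r + c` for some `γ` and a
constant `c`.  Here `ℂ[z,t] = MvPolynomial (Fin 2) ℂ` with `z = X 0`, `t = X 1`. -/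
theorem stmt6 (h : MvPolynomial (Fin 2) ℂ) (r : MvPolynomial (Fin 2) ℂ)
    (hr : r = X 0 ^ 2 + X 1 ^ 3)
    (hjac : pderiv 0 r * pderiv 1 h - pderiv 1 r * pderiv 0 h ∈ Ideal.span {r}) :
    ∃ (γ : MvPolynomial (Fin 2) ℂ) (c : ℂ), h = γ * r + C c := by
  subst hr
  rw [Ideal.mem_span_singleton] at hjac
  obtain ⟨q, hq⟩ := hjac
  set A := phi (pderiv 1 h) with hA
  set B := phi (pderiv 0 h) with hB
  have hjac0 : phi (pderiv 0 (X 0 ^ 2 + X 1 ^ 3 : MvPolynomial (Fin 2) ℂ) * pderiv 1 h -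
      pderiv 1 (X 0 ^ 2 + X 1 ^ 3 : MvPolynomial (Fin 2) ℂ) * pderiv 0 h) = 0 := by
    rw [hq, map_mul, phi_r, zero_mul]
  have hd0 : pderiv 0 (X 0 ^ 2 + X 1 ^ 3 : MvPolynomial (Fin 2) ℂ) = 2 * X 0 := by
    simp [pderiv_X]
  have hd1 : pderiv 1 (X 0 ^ 2 + X 1 ^ 3 : MvPolynomial (Fin 2) ℂ) = 3 * X 1 ^ 2 := by
    simp [pderiv_X]
  rw [hd0, hd1, map_sub, map_mul, map_mul, map_mul, map_mul, phi_X0, map_pow, phi_X1,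
    map_ofNat, map_ofNat, ← hA, ← hB] at hjac0
  -- hjac0 : 2 * X^3 * A - 3 * (-(X^2))^2 * B = 0
  have hD := chain h
  rw [← hA, ← hB] at hD
  simp only [map_neg, map_ofNat] at hD
  have hXD : Polynomial.X ^ 3 * Polynomial.derivative (phi h) = 0 := by
    rw [hD]
    linear_combination (-Polynomial.X : Polynomial ℂ) * hjac0
  have hD0 : Polynomial.derivative (phi h) = 0 := by
    rcases mul_eq_zero.mp hXD with hc | hc
    · exact absurd hc (pow_ne_zero _ Polynomial.X_ne_zero)
    · exact hc
  have hconst : phi h = Polynomial.C ((phi h).coeff 0) :=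
    Polynomial.eq_C_of_natDegree_eq_zero
      (Polynomial.natDegree_eq_zero_of_derivative_eq_zero hD0)
  set c := (phi h).coeff 0 with hc
  have hker : phi (h - C c) = 0 := by
    rw [map_sub, phi_C, ← hconst, sub_self]
  obtain ⟨γ, hγ⟩ := ker_phi _ hker
  exact ⟨γ, c, by linear_combination hγ⟩
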